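/- Let N, r, d, T be positive integers with d ≥ 2 and T ≤ N^(1/r). Define m = ⌊(d−1)·log T / log N⌋ and θ = r·log T / log N ∈ [0,1], and set G̃ = (1/(d^(1/(d−1))·2^(1/2))) · T^(2rm/(d−1)) / N^(rm(m+1)/(d(d−1))). Then G̃ > (1/3)·N^(θ²/r − 1/(d−1)). -/

import Mathlib

private lemma HH_key_ineq (dr rr x : ℝ) (m : ℕ) (hd : 2 ≤ dr) (hr : 0 < rr)
    (hmx : (m:ℝ) ≤ x) (hxm : x < (m:ℝ) + 1) (hxr : x ≤ (dr-1)/rr) :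
    x^2 - 2*m*x + (dr-1)*m*((m:ℝ)+1)/dr ≤ (dr-1)/rr := by
  have hd0 : (0:ℝ) < dr := by linarith
  have hm0 : (0:ℝ) ≤ (m:ℝ) := Nat.cast_nonneg m
  have h1 : (x - m)^2 ≤ x - m := by
    nlinarith [mul_nonneg (sub_nonneg.2 hmx) (sub_nonneg.2 hxm.le)]
  have h2 : (dr-1)*m*((m:ℝ)+1)/dr - (m:ℝ)^2 ≤ m := by
    rw [sub_le_iff_le_add, div_le_iff₀ hd0]
    nlinarith
  nlinarith [h1, h2, hxr]

private lemma HH_exp_ineq (dr rr L ℓ θ : ℝ) (m : ℕ) (hd : 2 ≤ dr) (hr : 0 < rr)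
    (hL : 0 < L) (hℓ0 : 0 ≤ ℓ) (hℓL : rr * ℓ ≤ L)
    (hm1 : (m:ℝ) ≤ (dr-1) * ℓ / L) (hm2 : (dr-1) * ℓ / L < (m:ℝ) + 1)
    (hθ : θ = rr * ℓ / L) :
    L * (θ^2/rr - 1/(dr-1)) ≤ ℓ * (2*rr*m/(dr-1)) - L * (rr*m*((m:ℝ)+1)/(dr*(dr-1))) := by
  have hd1 : (0:ℝ) < dr - 1 := by linarith
  have hd0 : (0:ℝ) < dr := by linarith
  obtain ⟨x, hx⟩ : ∃ x : ℝ, x = (dr - 1) * ℓ / L := ⟨_, rfl⟩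
  rw [← hx] at hm1 hm2
  have hxr : x ≤ (dr-1)/rr := by
    rw [hx, div_le_div_iff₀ hL hr]
    nlinarith
  have key := HH_key_ineq dr rr x m hd hr hm1 hm2 hxr
  have hℓx : ℓ = x * L / (dr-1) := by rw [hx]; field_simp
  have hθx : θ = rr * x / (dr-1) := by
    rw [hθ, hℓx]
    field_simp
  have hfactor : (x*L/(dr-1)) * (2*rr*m/(dr-1))
        - L*(rr*m*((m:ℝ)+1)/(dr*(dr-1)))
        - L * ((rr*x/(dr-1))^2/rr - 1/(dr-1))
      = (rr*L/(dr-1)^2) * ((dr-1)/rr - (x^2 - 2*m*x + (dr-1)*m*((m:ℝ)+1)/dr)) := by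
    field_simp
    ring
  have hcpos : (0:ℝ) ≤ rr*L/(dr-1)^2 := by positivity
  have hprod := mul_nonneg hcpos (sub_nonneg.2 key)
  rw [hθx, hℓx]
  linarith [hfactor, hprod]

/-- Harvey–Hittmeir Lemma 3.1: lower bound on the admissible half-interval width `G̃`. -/
theorem Gtilde_lower_bound (N r d T : ℕ) (hN : 0 < N) (hr : 0 < r) (hT : 0 < T)
    (hd : 2 ≤ d) (hTN : (T : ℝ) ≤ (N : ℝ) ^ ((1 : ℝ) / r))
    (m : ℕ) (hm : m = ⌊((d : ℝ) - 1) * Real.log T / Real.log N⌋₊)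
    (θ : ℝ) (hθ : θ = (r : ℝ) * Real.log T / Real.log N)
    (G : ℝ)
    (hG : G = 1 / ((d : ℝ) ^ ((1 : ℝ) / ((d : ℝ) - 1)) * Real.sqrt 2) *
        ((T : ℝ) ^ ((2 * (r : ℝ) * m) / ((d : ℝ) - 1)) /
          (N : ℝ) ^ (((r : ℝ) * m * (m + 1)) / ((d : ℝ) * ((d : ℝ) - 1)))) ) :
    G > 1 / 3 * (N : ℝ) ^ (θ ^ 2 / r - 1 / ((d : ℝ) - 1)) := by
  have hd1 : (0:ℝ) < (d:ℝ) - 1 := by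
    have : (2:ℝ) ≤ (d:ℝ) := by exact_mod_cast hd
    linarith
  have hdR : (2:ℝ) ≤ (d:ℝ) := by exact_mod_cast hd
  have hd0 : (0:ℝ) < (d:ℝ) := by linarith
  have hr0 : (0:ℝ) < (r:ℝ) := by exact_mod_cast hr
  have hN0 : (0:ℝ) < (N:ℝ) := by exact_mod_cast hN
  have hT0 : (0:ℝ) < (T:ℝ) := by exact_mod_cast hT
  have hℓ0 : 0 ≤ Real.log T := Real.log_natCast_nonneg T
  have hL0 : 0 ≤ Real.log N := Real.log_natCast_nonneg N
  have hℓL : (r:ℝ) * Real.log T ≤ Real.log N := by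
    have h := Real.log_le_log hT0 hTN
    rw [Real.log_rpow hN0] at h
    have h2 := mul_le_mul_of_nonneg_left h hr0.le
    rw [show (r:ℝ)*(1/r*Real.log N) = Real.log N by field_simp] at h2
    exact h2
  -- bound on the constant
  have hCconst : (d:ℝ) ^ ((1:ℝ)/((d:ℝ)-1)) ≤ 2 := by
    have hnat : d ≤ 2 ^ (d - 1) := by
      have := Nat.lt_two_pow_self (n := d - 1)
      omega
    have h2 : (d:ℝ) ≤ (2:ℝ) ^ ((d:ℝ) - 1) := by
      have hcast : (d:ℝ) - 1 = ((d - 1 : ℕ) : ℝ) := by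
        have h1d : (1:ℕ) ≤ d := by omega
        push_cast [h1d]
        ring
      rw [hcast, Real.rpow_natCast]
      exact_mod_cast hnat
    have h3 : ((d:ℝ)) ^ ((1:ℝ)/((d:ℝ)-1)) ≤ ((2:ℝ) ^ ((d:ℝ)-1)) ^ ((1:ℝ)/((d:ℝ)-1)) :=
      Real.rpow_le_rpow (le_of_lt hd0) h2 (by positivity)
    rwa [← Real.rpow_mul (by norm_num), mul_one_div, div_self (ne_of_gt hd1),
      Real.rpow_one] at h3
  have hsqrt2 : Real.sqrt 2 < 3/2 := by
    rw [show (3:ℝ)/2 = Real.sqrt ((3/2)^2) by rw [Real.sqrt_sq]; norm_num]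
    apply Real.sqrt_lt_sqrt <;> norm_num
  have hCpos : (0:ℝ) < (d:ℝ) ^ ((1:ℝ)/((d:ℝ)-1)) * Real.sqrt 2 := by positivity
  have hC : 1/3 < 1 / ((d:ℝ) ^ ((1:ℝ)/((d:ℝ)-1)) * Real.sqrt 2) := by
    rw [div_lt_div_iff₀ (by norm_num) hCpos]
    have h0 : (0:ℝ) ≤ Real.sqrt 2 := Real.sqrt_nonneg 2
    nlinarith
  -- the main exponent inequality
  have main : Real.log N * (θ^2/r - 1/((d:ℝ)-1)) ≤
      Real.log T * ((2 * (r:ℝ) * m) / ((d:ℝ) - 1))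
        - Real.log N * (((r:ℝ) * m * ((m:ℝ) + 1)) / ((d:ℝ) * ((d:ℝ) - 1))) := by
    rcases eq_or_lt_of_le hL0 with hLz | hLpos
    · have hℓz : Real.log T = 0 := by nlinarith
      rw [← hLz, hℓz]
      norm_num
    · have hmx : (m:ℝ) ≤ ((d:ℝ)-1) * Real.log T / Real.log N := by
        rw [hm]
        exact Nat.floor_le (by positivity)
      have hxm : ((d:ℝ)-1) * Real.log T / Real.log N < (m:ℝ) + 1 := by
        rw [hm]
        exact_mod_cast Nat.lt_floor_add_one (((d:ℝ) - 1) * Real.log T / Real.log N)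
      exact HH_exp_ineq (d:ℝ) (r:ℝ) (Real.log N) (Real.log T) θ m hdR hr0 hLpos hℓ0 hℓL
        hmx hxm hθ
  -- rewrite G and the RHS as exponentials
  have hGexp : G = 1 / ((d:ℝ) ^ ((1:ℝ)/((d:ℝ)-1)) * Real.sqrt 2) *
      Real.exp (Real.log T * ((2 * (r:ℝ) * m) / ((d:ℝ) - 1))
        - Real.log N * (((r:ℝ) * m * ((m:ℝ) + 1)) / ((d:ℝ) * ((d:ℝ) - 1)))) := by
    rw [hG, Real.rpow_def_of_pos hT0, Real.rpow_def_of_pos hN0, ← Real.exp_sub]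
  have hRHS : (N:ℝ) ^ (θ^2/r - 1/((d:ℝ)-1)) =
      Real.exp (Real.log N * (θ^2/r - 1/((d:ℝ)-1))) := by
    rw [Real.rpow_def_of_pos hN0]
  rw [hGexp, hRHS]
  calc 1/3 * Real.exp (Real.log N * (θ^2/r - 1/((d:ℝ)-1)))
      ≤ 1/3 * Real.exp (Real.log T * ((2 * (r:ℝ) * m) / ((d:ℝ) - 1))
          - Real.log N * (((r:ℝ) * m * ((m:ℝ) + 1)) / ((d:ℝ) * ((d:ℝ) - 1)))) := by
        apply mul_le_mul_of_nonneg_left (Real.exp_le_exp.2 main) (by norm_num)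
    _ < 1 / ((d:ℝ) ^ ((1:ℝ)/((d:ℝ)-1)) * Real.sqrt 2) *
          Real.exp (Real.log T * ((2 * (r:ℝ) * m) / ((d:ℝ) - 1))
            - Real.log N * (((r:ℝ) * m * ((m:ℝ) + 1)) / ((d:ℝ) * ((d:ℝ) - 1)))) :=
        mul_lt_mul_of_pos_right hC (Real.exp_pos _)
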